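/- arXiv:0902.4284 — 2 statements merged into one kernel-verified Lean document; each statement's English description precedes it below -/
import Mathlib

section
/- Fix a prime p and q ∈ ℂ_[p] with ‖q − 1‖ < p^{-1/(p-1)}. Then the q-bracket [·]_q maps the closed unit disk O_p bijectively onto itself, and it is a norm-preserving isometry: for all x, x' ∈ O_p one has ‖[x]_q − [x']_q‖ = ‖x − x'‖ and ‖[x]_q‖ = ‖x‖. -/
/-!
`K` plays the role of `ℂ_[p]`, the `p`-adic complex numbers: a complete, algebraically
closed, nonarchimedean normed field extending `ℚ_[p]` isometrically (so `‖(p : K)‖ = 1/p`).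
-/


section arith
variable {p : ℕ} [Fact p.Prime]

lemma val_mul_le (n : ℕ) (hn : n ≠ 0) :
    (padicValNat p n : ℝ) * ((p:ℝ) - 1) ≤ (n:ℝ) - 1 := by
  have hp := (Fact.out : p.Prime)
  have h1 : p ^ padicValNat p n ≤ n :=
    Nat.le_of_dvd (Nat.pos_of_ne_zero hn) pow_padicValNat_dvd
  set v := padicValNat p n
  have h2 : (1 : ℤ) + v * ((p:ℤ) - 1) ≤ (p:ℤ) ^ v := by
    have := one_add_mul_le_pow (a := (p:ℤ) - 1) (by
      have : (2:ℤ) ≤ p := by exact_mod_cast hp.two_le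
      linarith) v
    simpa using this
  have h3 : ((p:ℤ)) ^ v ≤ (n:ℤ) := by exact_mod_cast h1
  have : (1 : ℤ) + v * ((p:ℤ) - 1) ≤ n := h2.trans h3
  have := (by exact_mod_cast this : (1:ℝ) + v * ((p:ℝ) - 1) ≤ (n:ℝ))
  linarith

lemma val_factorial_mul_le (n : ℕ) (hn : n ≠ 0) :
    (padicValNat p (n.factorial) : ℝ) * ((p:ℝ) - 1) ≤ (n:ℝ) - 1 := by
  have hp := (Fact.out : p.Prime)
  have hleg : (p - 1) * padicValNat p (n.factorial) = n - (p.digits n).sum :=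
    sub_one_mul_padicValNat_factorial n
  have hs : 1 ≤ (p.digits n).sum := by
    have hne : p.digits n ≠ [] := Nat.digits_ne_nil_iff_ne_zero.mpr hn
    have hmem := List.getLast_mem hne
    have hlast := Nat.getLast_digit_ne_zero p hn
    calc 1 ≤ (p.digits n).getLast hne := Nat.one_le_iff_ne_zero.2 hlast
    _ ≤ (p.digits n).sum := List.single_le_sum (fun x _ => Nat.zero_le x) _ hmem
  have hnat : (p - 1) * padicValNat p (n.factorial) ≤ n - 1 := by
    rw [hleg]; omega
  have h2 : ((p:ℝ) - 1) * (padicValNat p (n.factorial) : ℝ) ≤ (n:ℝ) - 1 := by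
    have hp1 : 1 ≤ p := hp.one_lt.le
    have := (by exact_mod_cast hnat : ((p - 1 : ℕ) : ℝ) * (padicValNat p (n.factorial) : ℝ) ≤ ((n - 1 : ℕ) : ℝ))
    rw [Nat.cast_sub hp1, Nat.cast_sub (Nat.one_le_iff_ne_zero.2 hn)] at this
    simpa using this
  linarith
end arith

section normbound
variable {p : ℕ} [Fact p.Prime]

lemma padic_norm_ge {m n : ℕ} (hm : m ≠ 0)
    (h : (padicValNat p m : ℝ) * ((p:ℝ) - 1) ≤ (n:ℝ) - 1) :
    (p:ℝ) ^ (-(((n:ℝ) - 1) / ((p:ℝ) - 1))) ≤ ‖(m : ℚ_[p])‖ := by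
  have hp := (Fact.out : p.Prime)
  have hp1 : (1:ℝ) < p := by exact_mod_cast hp.one_lt
  have hnorm : ‖(m : ℚ_[p])‖ = (p:ℝ) ^ (-(padicValNat p m : ℝ)) := by
    rw [Padic.norm_eq_zpow_neg_valuation (by exact_mod_cast hm), Padic.valuation_natCast]
    rw [← Real.rpow_intCast]
    norm_num
  rw [hnorm, Real.rpow_le_rpow_left_iff hp1, neg_le_neg_iff]
  rw [le_div_iff₀ (by linarith : (0:ℝ) < (p:ℝ) - 1)]
  exact h

end normbound

noncomputable def rr (p : ℕ) : ℝ := (p:ℝ) ^ (-(1:ℝ) / ((p:ℝ) - 1))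

section K
variable {p : ℕ} [Fact p.Prime] {K : Type*} [NormedField K] [CompleteSpace K]
  [IsUltrametricDist K] [Algebra ℚ_[p] K]

lemma rr_pos : 0 < rr p := by
  have hp := (Fact.out : p.Prime)
  exact Real.rpow_pos_of_pos (by exact_mod_cast hp.pos) _

lemma term_bound (hisom : ∀ a : ℚ_[p], ‖algebraMap ℚ_[p] K a‖ = ‖a‖)
    {m n : ℕ} (hn : n ≠ 0) (hm : m ≠ 0)
    (hv : (padicValNat p m : ℝ) * ((p:ℝ) - 1) ≤ (n:ℝ) - 1) (z : K) :
    ‖z ^ n / (m : K)‖ ≤ ‖z‖ * (‖z‖ / rr p) ^ (n - 1) := by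
  have hp := (Fact.out : p.Prime)
  have hppos : (0:ℝ) < p := by exact_mod_cast hp.pos
  obtain ⟨k, rfl⟩ : ∃ k, n = k + 1 := ⟨n - 1, by omega⟩
  have hKm : ‖(m : K)‖ = ‖(m : ℚ_[p])‖ := by
    rw [← map_natCast (algebraMap ℚ_[p] K) m, hisom]
  have hrk : rr p ^ k = (p:ℝ) ^ (-((((k+1:ℕ):ℝ) - 1) / ((p:ℝ) - 1))) := by
    rw [rr, ← Real.rpow_natCast ((p:ℝ) ^ (-(1:ℝ) / ((p:ℝ) - 1))) k,
      ← Real.rpow_mul hppos.le]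
    congr 1
    push_cast
    ring
  have hmge : rr p ^ k ≤ ‖(m : K)‖ := by
    rw [hKm, hrk]; exact padic_norm_ge hm hv
  have hrkpos : (0:ℝ) < rr p ^ k := pow_pos rr_pos k
  have h1 : ‖z ^ (k+1) / (m : K)‖ ≤ ‖z‖ ^ (k+1) / rr p ^ k := by
    rw [norm_div, norm_pow]
    exact div_le_div_of_nonneg_left (by positivity) hrkpos hmge
  refine h1.trans (le_of_eq ?_)
  rw [Nat.add_sub_cancel, div_pow, pow_succ', mul_div_assoc]

end K

section K2
open IsUltrametricDist
variable {K : Type*} [NormedField K] [CompleteSpace K] [IsUltrametricDist K]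

lemma summable_of_geom_tail {f : ℕ → K} {C t : ℝ} (ht0 : 0 ≤ t) (ht : t < 1)
    (h : ∀ n, 1 ≤ n → ‖f n‖ ≤ C * t ^ (n - 1)) : Summable f := by
  apply NonarchimedeanAddGroup.summable_of_tendsto_cofinite_zero
  rw [Nat.cofinite_eq_atTop]
  refine squeeze_zero_norm' (a := fun n => C * t ^ (n - 1)) ?_ ?_
  · filter_upwards [Filter.eventually_ge_atTop 1] with n hn using h n hn
  · have h2 := (tendsto_pow_atTop_nhds_zero_of_lt_one ht0 ht).const_mul C
    rw [mul_zero] at h2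
    exact h2.comp (Filter.tendsto_sub_atTop_nat 1)

lemma norm_pow_sub_pow_le {x x' : K} (hx : ‖x‖ ≤ 1) (hx' : ‖x'‖ ≤ 1) (m : ℕ) :
    ‖x ^ m - x' ^ m‖ ≤ ‖x - x'‖ := by
  induction m with
  | zero => simp
  | succ k ih =>
    have hid : x ^ (k+1) - x' ^ (k+1) = x * (x ^ k - x' ^ k) + (x - x') * x' ^ k := by ring
    rw [hid]
    refine (IsUltrametricDist.norm_add_le_max _ _).trans (max_le ?_ ?_)
    · rw [norm_mul]
      calc ‖x‖ * ‖x ^ k - x' ^ k‖ ≤ 1 * ‖x - x'‖ :=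
        mul_le_mul hx ih (norm_nonneg _) zero_le_one
      _ = ‖x - x'‖ := one_mul _
    · rw [norm_mul, norm_pow]
      calc ‖x - x'‖ * ‖x'‖ ^ k ≤ ‖x - x'‖ * 1 := by
            exact mul_le_mul_of_nonneg_left (pow_le_one₀ (norm_nonneg _) hx') (norm_nonneg _)
      _ = ‖x - x'‖ := mul_one _

lemma tsum_head2_bound {f : ℕ → K} (hf : Summable f) {C : ℝ} (hC : 0 ≤ C)
    (h : ∀ n, ‖f (n + 2)‖ ≤ C) : ‖(∑' n, f n) - f 0 - f 1‖ ≤ C := by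
  have h1 : ∑' n, f n = f 0 + ∑' n, f (n + 1) := Summable.tsum_eq_zero_add hf
  have hf1 : Summable (fun n => f (n + 1)) := (summable_nat_add_iff 1).2 hf
  have h2 : ∑' n, f (n + 1) = f 1 + ∑' n, f (n + 2) := Summable.tsum_eq_zero_add hf1
  have : (∑' n, f n) - f 0 - f 1 = ∑' n, f (n + 2) := by rw [h1, h2]; ring
  rw [this]
  exact norm_tsum_le_of_forall_le_of_nonneg hC h

lemma norm_add_eq_left {a b : K} (h : ‖b‖ < ‖a‖) : ‖a + b‖ = ‖a‖ := by
  rw [norm_add_eq_max_of_norm_ne_norm (ne_of_gt h)]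
  exact max_eq_left h.le

end K2

noncomputable section

/-- The `p`-adic exponential, given by its power series. -/
def pexp {K : Type*} [NormedField K] [CompleteSpace K] (x : K) : K :=
  ∑' n : ℕ, x ^ n / (n.factorial : K)

/-- The `p`-adic logarithm, given by its power series around `1`. -/
def plog {K : Type*} [NormedField K] [CompleteSpace K] (q : K) : K :=
  ∑' n : ℕ, (-1) ^ (n + 1) * (q - 1) ^ n / (n : K)

/-- `q^x := exp (x · log q)`. -/
def qpow {K : Type*} [NormedField K] [CompleteSpace K] (q x : K) : K :=
  pexp (x * plog q)

open scoped Classical in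
/-- The `q`-bracket `[x]_q = (q^x - 1)/(q - 1)`, with `[x]_1 = x`. -/
def qbracket {K : Type*} [NormedField K] [CompleteSpace K] (q x : K) : K :=
  if q = 1 then x else (qpow q x - 1) / (q - 1)

theorem stmt0 (p : ℕ) [Fact p.Prime] (K : Type*) [NormedField K] [CompleteSpace K]
    [IsAlgClosed K] [IsUltrametricDist K] [Algebra ℚ_[p] K]
    (hisom : ∀ a : ℚ_[p], ‖algebraMap ℚ_[p] K a‖ = ‖a‖)
    (q : K) (hq : ‖q - 1‖ < (p : ℝ) ^ (-(1 : ℝ) / ((p : ℝ) - 1))) :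
    Set.BijOn (qbracket q) {x : K | ‖x‖ ≤ 1} {x : K | ‖x‖ ≤ 1} ∧
    (∀ x x' : K, ‖x‖ ≤ 1 → ‖x'‖ ≤ 1 →
      ‖qbracket q x - qbracket q x'‖ = ‖x - x'‖) ∧
    (∀ x : K, ‖x‖ ≤ 1 → ‖qbracket q x‖ = ‖x‖) := by
  classical
  by_cases hq1 : q = 1
  · subst hq1
    have hb : ∀ x : K, qbracket (1:K) x = x := fun x => by simp [qbracket]
    refine ⟨⟨fun x hx => by simpa [hb] using hx,
        fun x _ x' _ h => by simpa [hb] using h,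
        fun w hw => ⟨w, hw, hb w⟩⟩, ?_, ?_⟩
    · intro x x' _ _; rw [hb, hb]
    · intro x _; rw [hb]
  -- main case
  have hrpos : (0:ℝ) < rr p := rr_pos
  set y : K := q - 1 with hydef
  have hy0 : y ≠ 0 := sub_ne_zero.2 hq1
  have hypos : 0 < ‖y‖ := norm_pos_iff.2 hy0
  have hqr : ‖y‖ < rr p := hq
  set t : ℝ := ‖y‖ / rr p with htdef
  have ht0 : 0 < t := div_pos hypos hrpos
  have ht1 : t < 1 := (div_lt_one hrpos).2 hqr
  -- term bounds
  have tb : ∀ (z : K) (n : ℕ), n ≠ 0 → ‖z‖ ≤ ‖y‖ →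
      ‖z ^ n / (n.factorial : K)‖ ≤ ‖z‖ * t ^ (n - 1) := by
    intro z n hn hz
    refine (term_bound hisom hn (Nat.factorial_ne_zero n)
      (val_factorial_mul_le n hn) z).trans ?_
    gcongr
    rw [htdef]
    gcongr
  have tbl : ∀ (n : ℕ), n ≠ 0 → ‖y ^ n / (n : K)‖ ≤ ‖y‖ * t ^ (n - 1) := by
    intro n hn
    exact term_bound hisom hn hn (val_mul_le n hn) y
  have tpow : ∀ n : ℕ, t ^ (n + 1) ≤ t := by
    intro n
    calc t ^ (n+1) ≤ t ^ 1 := pow_le_pow_of_le_one ht0.le ht1.le (by omega)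
    _ = t := pow_one t
  -- the logarithm
  set L : K := plog q with hLdef
  have lnorm : ∀ n : ℕ, ‖(-1:K) ^ (n+1) * y ^ n / (n : K)‖ = ‖y ^ n / (n : K)‖ := by
    intro n
    rw [mul_div_assoc, norm_mul, norm_pow, norm_neg, norm_one, one_pow, one_mul]
  have lsum : Summable (fun n : ℕ => (-1:K) ^ (n+1) * (q-1) ^ n / (n : K)) := by
    refine summable_of_geom_tail (C := ‖y‖) ht0.le ht1 ?_
    intro n hn
    rw [← hydef, lnorm]
    exact tbl n (by omega)
  have hLsub : ‖L - y‖ ≤ t * ‖y‖ := by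
    have hb := tsum_head2_bound lsum (C := t * ‖y‖) (by positivity) ?_
    · have h0 : ((-1:K) ^ (0+1) * (q-1) ^ 0 / ((0:ℕ) : K)) = 0 := by simp
      have h1 : ((-1:K) ^ (1+1) * (q-1) ^ 1 / ((1:ℕ) : K)) = y := by
        rw [← hydef]; simp
      rw [h0, h1] at hb
      simpa [plog, hLdef] using hb
    · intro n
      rw [← hydef, lnorm]
      refine (tbl (n+2) (by omega)).trans ?_
      calc ‖y‖ * t ^ (n + 2 - 1) ≤ ‖y‖ * t := by
            simpa using mul_le_mul_of_nonneg_left (tpow n) (norm_nonneg y)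
      _ = t * ‖y‖ := mul_comm _ _
  have hLy : ‖L‖ = ‖y‖ := by
    have hlt : ‖L - y‖ < ‖y‖ := hLsub.trans_lt (by nlinarith)
    have : L = y + (L - y) := by ring
    rw [this, norm_add_eq_left hlt]
  -- exponential summability
  have esum : ∀ z : K, ‖z‖ ≤ ‖y‖ → Summable (fun n : ℕ => z ^ n / (n.factorial : K)) := by
    intro z hz
    refine summable_of_geom_tail (C := ‖z‖) ht0.le ht1 ?_
    intro n hn
    exact tb z n (by omega) hz
  -- key difference estimate for pexp
  have keyD : ∀ x x' : K, ‖x‖ ≤ 1 → ‖x'‖ ≤ 1 →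
      ‖(pexp (x * L) - pexp (x' * L)) - (x - x') * L‖ ≤ t * (‖x - x'‖ * ‖L‖) := by
    intro x x' hx hx'
    have hxL : ‖x * L‖ ≤ ‖y‖ := by
      rw [norm_mul, ← hLy]
      calc ‖x‖ * ‖L‖ ≤ 1 * ‖L‖ := by gcongr
      _ = ‖L‖ := one_mul _
    have hx'L : ‖x' * L‖ ≤ ‖y‖ := by
      rw [norm_mul, ← hLy]
      calc ‖x'‖ * ‖L‖ ≤ 1 * ‖L‖ := by gcongr
      _ = ‖L‖ := one_mul _
    have ha := esum _ hxL
    have hb := esum _ hx'L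
    set g : ℕ → K := fun n => (x * L) ^ n / (n.factorial : K)
      - (x' * L) ^ n / (n.factorial : K) with hgdef
    have hgsum : Summable g := ha.sub hb
    have hgt : ∑' n, g n = pexp (x * L) - pexp (x' * L) := Summable.tsum_sub ha hb
    have h0 : g 0 = 0 := by simp [hgdef]
    have h1 : g 1 = (x - x') * L := by
      simp only [hgdef, pow_one, Nat.factorial_one, Nat.cast_one, div_one]
      ring
    have hbound : ∀ n : ℕ, ‖g (n + 2)‖ ≤ t * (‖x - x'‖ * ‖L‖) := by
      intro n
      have hg2 : g (n+2) = (x ^ (n+2) - x' ^ (n+2)) * (L ^ (n+2) / ((n+2).factorial : K)) := by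
        simp only [hgdef, mul_pow]
        ring
      rw [hg2, norm_mul]
      have hA := norm_pow_sub_pow_le hx hx' (n+2)
      have hB : ‖L ^ (n+2) / ((n+2).factorial : K)‖ ≤ ‖L‖ * t := by
        refine (tb L (n+2) (by omega) (le_of_eq hLy)).trans ?_
        simpa using mul_le_mul_of_nonneg_left (tpow n) (norm_nonneg L)
      calc ‖x ^ (n+2) - x' ^ (n+2)‖ * ‖L ^ (n+2) / ((n+2).factorial : K)‖
          ≤ ‖x - x'‖ * (‖L‖ * t) :=
        mul_le_mul hA hB (norm_nonneg _) (norm_nonneg _)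
      _ = t * (‖x - x'‖ * ‖L‖) := by ring
    have hfin := tsum_head2_bound hgsum (C := t * (‖x - x'‖ * ‖L‖)) (by positivity) hbound
    rw [hgt, h0, h1] at hfin
    simpa using hfin
  -- qbracket formula
  have hqb : ∀ x : K, qbracket q x = (pexp (x * L) - 1) / y := by
    intro x
    rw [qbracket, if_neg hq1, qpow, ← hLdef, ← hydef]
  -- central estimate
  have key1 : ∀ x x' : K, ‖x‖ ≤ 1 → ‖x'‖ ≤ 1 →
      ‖(qbracket q x - qbracket q x') - (x - x')‖ ≤ t * ‖x - x'‖ := by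
    intro x x' hx hx'
    rw [hqb, hqb]
    have heq : (pexp (x * L) - 1) / y - (pexp (x' * L) - 1) / y - (x - x')
        = (((pexp (x * L) - pexp (x' * L)) - (x - x') * L) + (x - x') * (L - y)) / y := by
      field_simp
      ring
    rw [heq, norm_div, div_le_iff₀ hypos]
    refine (IsUltrametricDist.norm_add_le_max _ _).trans (max_le ?_ ?_)
    · refine (keyD x x' hx hx').trans (le_of_eq ?_)
      rw [hLy]; ring
    · rw [norm_mul]
      calc ‖x - x'‖ * ‖L - y‖ ≤ ‖x - x'‖ * (t * ‖y‖) :=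
        mul_le_mul_of_nonneg_left hLsub (norm_nonneg _)
      _ = t * ‖x - x'‖ * ‖y‖ := by ring
  -- isometry
  have key2 : ∀ x x' : K, ‖x‖ ≤ 1 → ‖x'‖ ≤ 1 →
      ‖qbracket q x - qbracket q x'‖ = ‖x - x'‖ := by
    intro x x' hx hx'
    rcases eq_or_ne x x' with rfl | hne
    · simp
    · have hpos : 0 < ‖x - x'‖ := norm_pos_iff.2 (sub_ne_zero.2 hne)
      have hlt : ‖(qbracket q x - qbracket q x') - (x - x')‖ < ‖x - x'‖ :=
        (key1 x x' hx hx').trans_lt (by nlinarith)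
      have hsplit : qbracket q x - qbracket q x'
          = (x - x') + ((qbracket q x - qbracket q x') - (x - x')) := by ring
      rw [hsplit, norm_add_eq_left hlt]
  -- qbracket q 0 = 0
  have h00 : qbracket q 0 = 0 := by
    have hpexp0 : pexp ((0:K) * L) = 1 := by
      rw [zero_mul, pexp]
      rw [tsum_eq_single 0 (by intro n hn; rw [zero_pow hn, zero_div])]
      simp
    rw [hqb 0, hpexp0]
    simp
  have key3 : ∀ x : K, ‖x‖ ≤ 1 → ‖qbracket q x‖ = ‖x‖ := by
    intro x hx
    have := key2 x 0 hx (by simp)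
    simpa [h00] using this
  -- surjectivity via Banach fixed point
  have hclosed : IsClosed {x : K | ‖x‖ ≤ 1} :=
    isClosed_le continuous_norm continuous_const
  haveI : CompleteSpace {x : K | ‖x‖ ≤ 1} := hclosed.completeSpace_coe
  haveI : Nonempty {x : K | ‖x‖ ≤ 1} := ⟨⟨0, by simp⟩⟩
  have hsurj : Set.SurjOn (qbracket q) {x : K | ‖x‖ ≤ 1} {x : K | ‖x‖ ≤ 1} := by
    intro w hw
    simp only [Set.mem_setOf_eq] at hw
    have hqx : ∀ x : K, ‖x‖ ≤ 1 → ‖qbracket q x - x‖ ≤ t * ‖x‖ := by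
      intro x hx
      have := key1 x 0 hx (by simp)
      simpa [h00] using this
    set g : {x : K | ‖x‖ ≤ 1} → {x : K | ‖x‖ ≤ 1} := fun x =>
      ⟨w - (qbracket q x.1 - x.1), by
        simp only [Set.mem_setOf_eq]
        rw [sub_eq_add_neg]
        refine (IsUltrametricDist.norm_add_le_max _ _).trans (max_le hw ?_)
        rw [norm_neg]
        refine (hqx x.1 x.2).trans ?_
        calc t * ‖x.1‖ ≤ 1 * 1 := by
              apply mul_le_mul ht1.le x.2 (norm_nonneg _) zero_le_one
        _ = 1 := one_mul 1⟩ with hgdef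
    have hg : LipschitzWith ⟨t, ht0.le⟩ g := by
      apply LipschitzWith.of_dist_le_mul
      intro a b
      have hab : (g a).1 - (g b).1
          = -((qbracket q a.1 - qbracket q b.1) - (a.1 - b.1)) := by
        simp only [hgdef]
        ring
      have hd1 : dist (g a) (g b) = ‖(g a).1 - (g b).1‖ := by
        rw [Subtype.dist_eq, dist_eq_norm]
      have hd2 : dist a b = ‖a.1 - b.1‖ := by
        rw [Subtype.dist_eq, dist_eq_norm]
      rw [hd1, hd2, hab, norm_neg]
      show _ ≤ t * ‖a.1 - b.1‖
      exact key1 a.1 b.1 a.2 b.2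
    have hc : ContractingWith ⟨t, ht0.le⟩ g := ⟨by exact_mod_cast ht1, hg⟩
    set x₀ := ContractingWith.fixedPoint g hc with hx₀def
    have hfix : g x₀ = x₀ := hc.fixedPoint_isFixedPt
    refine ⟨x₀.1, x₀.2, ?_⟩
    have hval : w - (qbracket q x₀.1 - x₀.1) = x₀.1 := congrArg Subtype.val hfix
    linear_combination -hval
  -- assemble
  refine ⟨⟨?_, ?_, hsurj⟩, key2, key3⟩
  · intro x hx
    simp only [Set.mem_setOf_eq] at hx ⊢
    rw [key3 x hx]
    exact hx
  · intro x hx x' hx' h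
    simp only [Set.mem_setOf_eq] at hx hx'
    have := key2 x x' hx hx'
    rw [h, sub_self, norm_zero] at this
    have := (norm_eq_zero.mp this.symm)
    exact sub_eq_zero.mp this
end
end

section
/- Let p be a prime. There exist x, q ∈ ℤ_p with x ∉ {0, 1}, q ≠ 1, ‖q − 1‖_p < p^{-1/(p-1)} (i.e., q ≡ 1 mod p if p is odd, and q ≡ 1 mod 4 if p = 2), and [x]_q = x, if and only if p = 3. -/
/-!
`K` plays the role of `ℂ_[p]`, the `p`-adic complex numbers: a complete, algebraically
closed, nonarchimedean normed field extending `ℚ_[p]` isometrically (so `‖(p : K)‖ = 1/p`).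
-/

noncomputable section

namespace Stmt17Aux

open Filter Finset IsUltrametricDist

variable {p : ℕ} [hp : Fact p.Prime]

lemma one_lt_pR : (1:ℝ) < (p:ℝ) := by exact_mod_cast hp.out.one_lt

lemma ppos : (0:ℝ) < (p:ℝ) := lt_trans one_pos one_lt_pR

lemma zpow_mono {a b : ℤ} (h : a ≤ b) : (p:ℝ)^a ≤ (p:ℝ)^b :=
  zpow_le_zpow_right₀ (le_of_lt one_lt_pR) h

lemma zpowp_pos (a : ℤ) : (0:ℝ) < (p:ℝ)^a := zpow_pos ppos a

lemma zpow_le_one {w : ℕ} : (p:ℝ)^(-(w:ℤ)) ≤ 1 := by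
  have : (p:ℝ)^(-(w:ℤ)) ≤ (p:ℝ)^(0:ℤ) := zpow_mono (by omega)
  simpa using this

/-- sum of base-p digits of a positive number is positive -/
lemma digits_sum_pos {n : ℕ} (hn : n ≠ 0) : 1 ≤ (p.digits n).sum := by
  by_contra hs
  push_neg at hs
  have hs0 : (p.digits n).sum = 0 := by omega
  apply hn
  have hz : ∀ L : List ℕ, L.sum = 0 → Nat.ofDigits p L = 0 := by
    intro L
    induction L with
    | nil => intro _; simp [Nat.ofDigits]
    | cons a t ih =>
        intro h
        simp only [List.sum_cons] at h
        rw [Nat.ofDigits_cons, ih (by omega), (by omega : a = 0)]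
        simp
  rw [← Nat.ofDigits_digits p n]
  exact hz _ hs0

lemma valfact_le (n : ℕ) : (p - 1) * padicValNat p n.factorial ≤ n - 1 := by
  rcases Nat.eq_zero_or_pos n with rfl | hn
  · simp [Nat.factorial]
  · rw [sub_one_mul_padicValNat_factorial]
    have h1 := digits_sum_pos (p := p) (by omega : n ≠ 0)
    omega

lemma norm_natCast_eq (m : ℕ) (hm : m ≠ 0) :
    ‖(m : ℚ_[p])‖ = (p:ℝ) ^ (-(padicValNat p m : ℤ)) := by
  have hfac := Nat.ordProj_mul_ordCompl_eq_self m p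
  have hvv : m.factorization p = padicValNat p m := Nat.factorization_def m hp.out
  set v := m.factorization p with hv
  have hsplit : (m : ℚ_[p]) = (p:ℚ_[p])^v * ((m / p^v : ℕ) : ℚ_[p]) := by
    rw [← Nat.cast_pow, ← Nat.cast_mul, hfac]
  have hle : ‖((m / p^v : ℕ) : ℚ_[p])‖ ≤ 1 := by
    have := Padic.norm_int_le_one (p := p) ((m / p^v : ℕ) : ℤ)
    exact_mod_cast this
  have hnd : ¬ ((p:ℤ) ∣ ((m / p^v : ℕ) : ℤ)) := by
    rw [Int.natCast_dvd_natCast]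
    exact Nat.not_dvd_ordCompl hp.out hm
  have hunit : ‖((m / p^v : ℕ) : ℚ_[p])‖ = 1 := by
    refine le_antisymm hle (not_lt.mp fun hlt => hnd ?_)
    exact Padic.norm_intCast_lt_one_iff.mp (by exact_mod_cast hlt)
  rw [hsplit, norm_mul, norm_pow, Padic.norm_p, hunit, mul_one, inv_pow,
    ← zpow_natCast, ← zpow_neg, hvv]

lemma norm_inv_natCast (m : ℕ) (hm : m ≠ 0) :
    ‖((m : ℚ_[p]))⁻¹‖ = (p:ℝ) ^ ((padicValNat p m : ℤ)) := by
  rw [norm_inv, norm_natCast_eq m hm, ← zpow_neg, neg_neg]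

lemma norm_inv_factorial_le {w : ℕ} (hw2 : 2 ≤ (p-1)*w) (n : ℕ) :
    ‖((n.factorial : ℚ_[p]))⁻¹‖ ≤ (p:ℝ) ^ ((w * (n-1) : ℕ) : ℤ) := by
  rw [norm_inv_natCast _ (Nat.factorial_ne_zero n)]
  apply zpow_mono
  have h1 := valfact_le (p := p) n
  have hp1 : 1 ≤ p - 1 := by have := hp.out.two_le; omega
  have h2 : n - 1 ≤ (p-1) * (w * (n-1)) := by
    have h3 : 1 * (n-1) ≤ ((p-1)*w) * (n-1) := Nat.mul_le_mul_right _ (by omega)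
    rw [one_mul] at h3
    calc n - 1 ≤ ((p-1)*w) * (n-1) := h3
      _ = (p-1) * (w * (n-1)) := by ring
  have h4 : (p-1) * padicValNat p n.factorial ≤ (p-1) * (w * (n-1)) := le_trans h1 h2
  exact_mod_cast Nat.le_of_mul_le_mul_left h4 (by omega)

lemma norm_term_le {w : ℕ} (hw2 : 2 ≤ (p-1)*w) {a : ℚ_[p]} (ha : ‖a‖ ≤ (p:ℝ)^(-(w:ℤ)))
    {n : ℕ} (hn : n ≠ 0) :
    ‖a ^ n / (n.factorial : ℚ_[p])‖ ≤ ‖a‖ := by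
  obtain ⟨m, rfl⟩ : ∃ m, n = m + 1 := ⟨n-1, by omega⟩
  rw [div_eq_mul_inv, norm_mul, norm_pow]
  have hb := norm_inv_factorial_le (p := p) hw2 (m+1)
  simp only [Nat.add_sub_cancel] at hb
  have key : ‖a‖^m * (p:ℝ)^((w*m : ℕ):ℤ) ≤ 1 := by
    have h1 : ‖a‖^m ≤ ((p:ℝ)^(-(w:ℤ)))^m := pow_le_pow_left₀ (norm_nonneg a) ha m
    have h2 : ((p:ℝ)^(-(w:ℤ)))^m = (p:ℝ)^(-((w*m:ℕ):ℤ)) := by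
      rw [← zpow_natCast ((p:ℝ)^(-(w:ℤ))) m, ← zpow_mul]
      congr 1
      push_cast
      ring
    calc ‖a‖^m * (p:ℝ)^((w*m : ℕ):ℤ) ≤ (p:ℝ)^(-((w*m:ℕ):ℤ)) * (p:ℝ)^((w*m : ℕ):ℤ) := by
          apply mul_le_mul_of_nonneg_right _ (le_of_lt (zpowp_pos _))
          rw [← h2]; exact h1
      _ = 1 := by rw [← zpow_add₀ (ne_of_gt ppos)]; simp
  calc ‖a‖^(m+1) * ‖(((m+1).factorial : ℚ_[p]))⁻¹‖
      ≤ ‖a‖^(m+1) * (p:ℝ)^((w*m : ℕ):ℤ) := by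
        apply mul_le_mul_of_nonneg_left hb (pow_nonneg (norm_nonneg a) _)
    _ = ‖a‖ * (‖a‖^m * (p:ℝ)^((w*m : ℕ):ℤ)) := by ring
    _ ≤ ‖a‖ * 1 := mul_le_mul_of_nonneg_left key (norm_nonneg a)
    _ = ‖a‖ := mul_one _

lemma norm_factorial_le_norm_natCast {n : ℕ} (hn : n ≠ 0) :
    ‖((n.factorial : ℚ_[p]))‖ ≤ ‖(n : ℚ_[p])‖ := by
  obtain ⟨m, rfl⟩ : ∃ m, n = m + 1 := ⟨n-1, by omega⟩
  have h1 : ((m+1).factorial : ℚ_[p]) = ((m+1 : ℕ) : ℚ_[p]) * (m.factorial : ℚ_[p]) := by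
    rw [Nat.factorial_succ]; push_cast; ring
  rw [h1, norm_mul]
  have h2 : ‖((m.factorial : ℕ) : ℚ_[p])‖ ≤ 1 := by
    have := Padic.norm_int_le_one (p := p) ((m.factorial : ℕ) : ℤ)
    exact_mod_cast this
  calc ‖((m+1 : ℕ) : ℚ_[p])‖ * ‖((m.factorial : ℕ) : ℚ_[p])‖
      ≤ ‖((m+1 : ℕ) : ℚ_[p])‖ * 1 := by
        apply mul_le_mul_of_nonneg_left h2 (norm_nonneg _)
    _ = ‖((m+1:ℕ) : ℚ_[p])‖ := mul_one _

lemma norm_div_nat_le {a : ℚ_[p]} {n : ℕ} (hn : n ≠ 0) :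
    ‖a ^ n / (n : ℚ_[p])‖ ≤ ‖a ^ n / (n.factorial : ℚ_[p])‖ := by
  rw [div_eq_mul_inv, div_eq_mul_inv, norm_mul, norm_mul]
  apply mul_le_mul_of_nonneg_left _ (norm_nonneg _)
  rw [norm_inv, norm_inv]
  have h1 : (0:ℝ) < ‖((n.factorial : ℚ_[p]))‖ := by
    apply norm_pos_iff.mpr
    exact_mod_cast Nat.cast_ne_zero.mpr (Nat.factorial_ne_zero n)
  exact inv_anti₀ h1 (norm_factorial_le_norm_natCast hn)

/-- the radius bound appearing in the statement -/
def rad (p : ℕ) : ℝ := (p:ℝ) ^ (-(1:ℝ)/((p:ℝ)-1))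

lemma rad_eq : rad p = ((p:ℝ) ^ ((1:ℝ)/((p:ℝ)-1)))⁻¹ := by
  rw [rad, neg_div, Real.rpow_neg ppos.le]

lemma pm1_pos : (0:ℝ) < (p:ℝ) - 1 := by linarith [one_lt_pR (p := p)]

lemma pm1_cast : ((p - 1 : ℕ) : ℝ) = (p:ℝ) - 1 := by
  have := hp.out.two_le
  push_cast [Nat.cast_sub (by omega : 1 ≤ p)]
  ring

lemma summable_norm_exp {a : ℚ_[p]} (ha : ‖a‖ < rad p) :
    Summable (fun n : ℕ => ‖a ^ n / (n.factorial : ℚ_[p])‖) := by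
  set X : ℝ := (p:ℝ) ^ ((1:ℝ)/((p:ℝ)-1)) with hX
  have hXpos : 0 < X := Real.rpow_pos_of_pos ppos _
  have hr : ‖a‖ * X < 1 := by
    rw [rad_eq] at ha
    calc ‖a‖ * X < X⁻¹ * X := mul_lt_mul_of_pos_right ha hXpos
      _ = 1 := inv_mul_cancel₀ (ne_of_gt hXpos)
  have hbound : ∀ n : ℕ, ‖a ^ n / (n.factorial : ℚ_[p])‖ ≤ (‖a‖ * X)^n := by
    intro n
    rw [div_eq_mul_inv, norm_mul, norm_pow, norm_inv_natCast _ (Nat.factorial_ne_zero n),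
      mul_pow]
    apply mul_le_mul_of_nonneg_left _ (pow_nonneg (norm_nonneg a) n)
    have h1 : (p:ℝ) ^ ((padicValNat p n.factorial : ℤ))
        = (p:ℝ) ^ ((padicValNat p n.factorial : ℝ)) := by
      rw [← Real.rpow_intCast]
      norm_num
    have h2 : X ^ n = (p:ℝ) ^ ((n:ℝ) * ((1:ℝ)/((p:ℝ)-1))) := by
      rw [hX, ← Real.rpow_natCast X n, ← Real.rpow_mul ppos.le]
      ring_nf
    rw [h1, h2]
    apply Real.rpow_le_rpow_of_exponent_le (le_of_lt one_lt_pR)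
    rw [mul_one_div, le_div_iff₀ pm1_pos]
    have h3 : (p-1) * padicValNat p n.factorial ≤ n := le_trans (valfact_le n) (Nat.sub_le n 1)
    have h4 : ((p-1 : ℕ) : ℝ) * (padicValNat p n.factorial : ℝ) ≤ (n:ℝ) := by exact_mod_cast h3
    rw [pm1_cast] at h4
    linarith
  exact Summable.of_nonneg_of_le (fun n => norm_nonneg _) hbound
    (summable_geometric_of_lt_one (by positivity) hr)

lemma summable_exp {a : ℚ_[p]} (ha : ‖a‖ < rad p) :
    Summable (fun n : ℕ => a ^ n / (n.factorial : ℚ_[p])) :=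
  (summable_norm_exp ha).of_norm

lemma norm_inv_natCast_le (n : ℕ) (hn : n ≠ 0) : ‖((n : ℚ_[p]))⁻¹‖ ≤ (n:ℝ) := by
  rw [norm_inv_natCast n hn]
  have h1 : (p:ℝ)^((padicValNat p n : ℤ)) = ((p ^ padicValNat p n : ℕ) : ℝ) := by
    rw [zpow_natCast, Nat.cast_pow]
  rw [h1]
  exact_mod_cast Nat.le_of_dvd (Nat.pos_of_ne_zero hn) pow_padicValNat_dvd

lemma summable_of_norm_le_nat_mul_geom {f : ℕ → ℚ_[p]} {r : ℝ} (hr : r < 1) (hr0 : 0 ≤ r)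
    (hf : ∀ n, ‖f n‖ ≤ n * r ^ n) : Summable f := by
  apply Summable.of_norm
  apply Summable.of_nonneg_of_le (fun n => norm_nonneg _) hf
  have := summable_pow_mul_geometric_of_norm_lt_one (R := ℝ) 1 (r := r)
    (by rwa [Real.norm_eq_abs, abs_of_nonneg hr0])
  simpa using this

lemma norm_neg_one_pow (k : ℕ) : ‖((-1 : ℚ_[p]))^k‖ = 1 := by
  rw [norm_pow, norm_neg, norm_one, one_pow]

lemma summable_log {u : ℚ_[p]} (hu : ‖u - 1‖ < 1) :
    Summable (fun n : ℕ => (-1:ℚ_[p]) ^ (n+1) * (u-1) ^ n / (n : ℚ_[p])) := by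
  apply summable_of_norm_le_nat_mul_geom hu (norm_nonneg _)
  intro n
  rcases Nat.eq_zero_or_pos n with rfl | hn
  · simp
  · rw [div_eq_mul_inv, norm_mul, norm_mul, norm_neg_one_pow, one_mul, norm_pow]
    rw [mul_comm]
    apply mul_le_mul_of_nonneg_right (norm_inv_natCast_le n (by omega))
      (pow_nonneg (norm_nonneg _) n)

lemma pexp_def (a : ℚ_[p]) : pexp a = ∑' n : ℕ, a ^ n / (n.factorial : ℚ_[p]) := rfl

lemma plog_def (u : ℚ_[p]) : plog u = ∑' n : ℕ, (-1:ℚ_[p]) ^ (n+1) * (u-1) ^ n / (n : ℚ_[p]) := rfl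

lemma pexp_zero : pexp (0 : ℚ_[p]) = 1 := by
  rw [pexp_def, tsum_eq_single 0 ?_]
  · simp
  · intro n hn
    simp [zero_pow hn]

lemma pexp_add {a b : ℚ_[p]} (ha : ‖a‖ < rad p) (hb : ‖b‖ < rad p) :
    pexp (a + b) = pexp a * pexp b := by
  rw [pexp_def, pexp_def, pexp_def,
    tsum_mul_tsum_eq_tsum_sum_antidiagonal_of_summable_norm (summable_norm_exp ha)
      (summable_norm_exp hb)]
  congr 1
  funext n
  rw [Finset.Nat.sum_antidiagonal_eq_sum_range_succ_mk, add_pow, Finset.sum_div]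
  refine Finset.sum_congr rfl fun k hk => ?_
  have hkn : k ≤ n := Nat.lt_succ_iff.mp (Finset.mem_range.mp hk)
  rw [Nat.cast_choose ℚ_[p] hkn]
  have h1 : ((k.factorial : ℚ_[p])) ≠ 0 := Nat.cast_ne_zero.mpr (Nat.factorial_ne_zero _)
  have h2 : (((n-k).factorial : ℚ_[p])) ≠ 0 := Nat.cast_ne_zero.mpr (Nat.factorial_ne_zero _)
  have h3 : ((n.factorial : ℚ_[p])) ≠ 0 := Nat.cast_ne_zero.mpr (Nat.factorial_ne_zero _)
  field_simp

lemma norm_natCast_le_one (n : ℕ) : ‖((n : ℚ_[p]))‖ ≤ 1 := by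
  have := Padic.norm_int_le_one (p := p) (n : ℤ)
  exact_mod_cast this

lemma pexp_natCast_mul {a : ℚ_[p]} (ha : ‖a‖ < rad p) (n : ℕ) :
    pexp ((n : ℚ_[p]) * a) = pexp a ^ n := by
  induction n with
  | zero => simp [pexp_zero]
  | succ m ih =>
      have hma : ‖(m : ℚ_[p]) * a‖ < rad p := by
        rw [norm_mul]
        calc ‖(m:ℚ_[p])‖ * ‖a‖ ≤ 1 * ‖a‖ :=
              mul_le_mul_of_nonneg_right (norm_natCast_le_one m) (norm_nonneg a)
          _ = ‖a‖ := one_mul _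
          _ < rad p := ha
      rw [show ((m+1 : ℕ) : ℚ_[p]) * a = (m:ℚ_[p]) * a + a by push_cast; ring,
        pexp_add hma ha, ih, pow_succ]

lemma pexp_sub_one {a : ℚ_[p]} (ha : ‖a‖ < rad p) :
    pexp a - 1 = ∑' n : ℕ, a ^ (n+1) / ((n+1).factorial : ℚ_[p]) := by
  rw [pexp_def, Summable.tsum_eq_zero_add (summable_exp ha)]
  simp

lemma pexp_sub_one_sub {a : ℚ_[p]} (ha : ‖a‖ < rad p) :
    pexp a - 1 - a = ∑' n : ℕ, a ^ (n+2) / ((n+2).factorial : ℚ_[p]) := by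
  rw [pexp_sub_one ha,
    Summable.tsum_eq_zero_add ((summable_nat_add_iff 1).mpr (summable_exp ha))]
  simp [Nat.factorial]

lemma zpow_neg_lt_one {w : ℕ} (hw1 : 1 ≤ w) : (p:ℝ)^(-(w:ℤ)) < 1 := by
  have h1 : (p:ℝ)^(-(w:ℤ)) ≤ (p:ℝ)^(-1:ℤ) := zpow_mono (by omega)
  have h2 : (p:ℝ)^(-1:ℤ) < 1 := by
    rw [zpow_neg_one]
    exact inv_lt_one_of_one_lt₀ one_lt_pR
  linarith

lemma two_mul_le_two_pow {m : ℕ} (hm : 1 ≤ m) : 2*m ≤ 2^m := by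
  induction m with
  | zero => omega
  | succ j ih =>
      rcases Nat.eq_zero_or_pos j with rfl | hj
      · norm_num
      · have h1 := ih hj
        have h2 : 2 ^ (j+1) = 2 * 2^j := by ring
        omega

lemma three_pow_ge {v : ℕ} (hv : 1 ≤ v) : v + 2 ≤ 3^v := by
  induction v with
  | zero => omega
  | succ j ih =>
      rcases Nat.eq_zero_or_pos j with rfl | hj
      · norm_num
      · have h1 := ih hj
        have h2 : 3^(j+1) = 3*3^j := by ring
        omega

lemma arith4 {w n k : ℕ} (hw1 : 1 ≤ w) (hk : p ^ n ≤ k) :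
    n + padicValNat p k ≤ w * k := by
  have hp2 : 2 ≤ p := hp.out.two_le
  have hk0 : 0 < k := lt_of_lt_of_le (pow_pos (by omega) n) hk
  have hpv : p ^ padicValNat p k ≤ k := Nat.le_of_dvd hk0 pow_padicValNat_dvd
  set v := padicValNat p k with hv
  have h2pv : 2 ^ v ≤ k := le_trans (Nat.pow_le_pow_left hp2 v) hpv
  have h2pn : 2 ^ n ≤ k := le_trans (Nat.pow_le_pow_left hp2 n) hk
  have hwk : k ≤ w * k := Nat.le_mul_of_pos_left k hw1
  rcases le_or_gt v n with hvn | hnv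
  · rcases Nat.eq_zero_or_pos n with rfl | hn
    · omega
    · have := two_mul_le_two_pow hn
      omega
  · have hv1 : 1 ≤ v := by omega
    have := two_mul_le_two_pow hv1
    omega

lemma arith1 {w k : ℕ} (hw1 : 1 ≤ w) (hw2 : 2 ≤ (p-1)*w) (hk : 2 ≤ k) :
    padicValNat p k + 1 ≤ w * (k-1) := by
  have hp2 : 2 ≤ p := hp.out.two_le
  have hpv : p ^ padicValNat p k ≤ k := Nat.le_of_dvd (by omega) pow_padicValNat_dvd
  set v := padicValNat p k with hv
  rcases eq_or_ne p 2 with hp2' | hpodd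
  · subst hp2'
    have hw : 2 ≤ w := by omega
    have hvk : v < 2^v := Nat.lt_two_pow_self
    have h1 : 2*(k-1) ≤ w*(k-1) := Nat.mul_le_mul_right _ hw
    omega
  · have hp3 : 3 ≤ p := by omega
    have hv2 : v + 2 ≤ k := by
      rcases Nat.eq_zero_or_pos v with hv0 | hv1
      · omega
      · have h3 := three_pow_ge hv1
        have h4 : 3 ^ v ≤ p ^ v := Nat.pow_le_pow_left hp3 v
        omega
    have h5 : 1*(k-1) ≤ w*(k-1) := Nat.mul_le_mul_right _ hw1
    omega

lemma arith2 {w n : ℕ} (hw1 : 1 ≤ w) (hw2 : 2 ≤ (p-1)*w) (hp3 : p ≠ 3) (hn : 3 ≤ n) :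
    padicValNat p n.factorial + 1 ≤ w * (n-2) + padicValNat p 2 := by
  have hvf := valfact_le (p := p) n
  rcases eq_or_ne p 2 with rfl | hne2
  · have hw : 2 ≤ w := by omega
    have hval2 : padicValNat 2 2 = 1 := padicValNat.self (by norm_num)
    have h1 : 2*(n-2) ≤ w*(n-2) := Nat.mul_le_mul_right _ hw
    omega
  · have hp5 : 5 ≤ p := by
      have h2 := hp.out.two_le
      have h4 : p ≠ 4 := by
        intro h
        have : ¬ (4:ℕ).Prime := by norm_num
        exact this (h ▸ hp.out)
      omega
    have hval2 : padicValNat p 2 = 0 := padicValNat.eq_zero_of_not_dvd (by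
      intro h
      have := Nat.le_of_dvd (by norm_num) h
      omega)
    have h4v : 4 * padicValNat p n.factorial ≤ n - 1 := by
      have := Nat.mul_le_mul_right (padicValNat p n.factorial) (by omega : 4 ≤ p - 1)
      omega
    have h5 : 1*(n-2) ≤ w*(n-2) := Nat.mul_le_mul_right _ hw1
    omega

lemma zpow_lt_rad {w : ℕ} (hw2 : 2 ≤ (p-1)*w) : (p:ℝ)^(-(w:ℤ)) < rad p := by
  rw [rad, ← Real.rpow_intCast (p:ℝ) (-(w:ℤ))]
  apply Real.rpow_lt_rpow_of_exponent_lt one_lt_pR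
  have h2 : (2:ℝ) ≤ ((p-1:ℕ):ℝ) * (w:ℝ) := by exact_mod_cast hw2
  rw [pm1_cast] at h2
  have h3 : (1:ℝ)/((p:ℝ)-1) < (w:ℝ) := by
    rw [div_lt_iff₀ pm1_pos, mul_comm]
    linarith
  push_cast
  rw [neg_div]
  exact neg_lt_neg h3

lemma norm_plog_le {w : ℕ} (hw2 : 2 ≤ (p-1)*w) {u : ℚ_[p]}
    (hu : ‖u - 1‖ ≤ (p:ℝ)^(-(w:ℤ))) : ‖plog u‖ ≤ ‖u - 1‖ := by
  rw [plog_def]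
  apply norm_tsum_le_of_forall_le_of_nonneg (norm_nonneg _)
  intro n
  rcases Nat.eq_zero_or_pos n with rfl | hn
  · simp
  · have h1 : ‖(u-1)^n / (n : ℚ_[p])‖ ≤ ‖(u-1)^n / (n.factorial : ℚ_[p])‖ :=
      norm_div_nat_le (by omega)
    have h2 : ‖(u-1)^n / (n.factorial : ℚ_[p])‖ ≤ ‖u-1‖ := norm_term_le hw2 hu (by omega)
    calc ‖(-1:ℚ_[p])^(n+1) * (u-1)^n / (n:ℚ_[p])‖ = ‖(u-1)^n/(n:ℚ_[p])‖ := by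
          rw [mul_div_assoc, norm_mul, norm_neg_one_pow, one_mul]
      _ ≤ ‖u-1‖ := le_trans h1 h2

lemma norm_pexp_sub_one_le {w : ℕ} (hw2 : 2 ≤ (p-1)*w) {a : ℚ_[p]}
    (ha : ‖a‖ ≤ (p:ℝ)^(-(w:ℤ))) : ‖pexp a - 1‖ ≤ ‖a‖ := by
  rw [pexp_sub_one (lt_of_le_of_lt ha (zpow_lt_rad hw2))]
  apply norm_tsum_le_of_forall_le_of_nonneg (norm_nonneg a)
  intro n
  exact norm_term_le hw2 ha (Nat.succ_ne_zero n)

lemma choose_congr {n m N : ℕ} (hN : N = p ^ n) (hm : m + 1 ≤ N) :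
    ((p:ℤ)^n) ∣ ((m.factorial : ℤ) * ((N-1).choose m : ℤ) - (-1)^m * (m.factorial : ℤ)) := by
  have h1 : (N-1).descFactorial m = m.factorial * (N-1).choose m :=
    Nat.descFactorial_eq_factorial_mul_choose _ _
  have h2 : ∀ i ∈ Finset.range m, ((N - 1 - i : ℕ) : ZMod (p^n)) = -(1+(i:ZMod (p^n))) := by
    intro i hi
    have him : i < m := Finset.mem_range.mp hi
    have hcast : ((N - 1 - i : ℕ) : ZMod (p^n)) = ((N:ℕ) : ZMod (p^n)) - 1 - (i : ZMod (p^n)) := by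
      rw [Nat.cast_sub (by omega : i ≤ N - 1), Nat.cast_sub (by omega : 1 ≤ N)]
      push_cast
      ring
    rw [hcast, hN, ZMod.natCast_self]
    ring
  have h3 : (((N-1).descFactorial m : ℕ) : ZMod (p^n))
      = (-1)^m * ((m.factorial : ℕ) : ZMod (p^n)) := by
    rw [Nat.descFactorial_eq_prod_range, Nat.cast_prod]
    rw [Finset.prod_congr rfl h2]
    have h4 : ∀ i ∈ Finset.range m,
        (-(1+(i : ZMod (p^n)))) = (-1) * ((i+1 : ℕ) : ZMod (p^n)) := by
      intro i _
      push_cast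
      ring
    rw [Finset.prod_congr rfl h4, Finset.prod_mul_distrib, Finset.prod_const,
      ← Nat.cast_prod, Finset.prod_range_add_one_eq_factorial, Finset.card_range]
  have h5 : (((m.factorial : ℤ) * ((N-1).choose m : ℤ) - (-1)^m * (m.factorial : ℤ) : ℤ)
      : ZMod (p^n)) = 0 := by
    push_cast
    rw [← Nat.cast_mul, ← h1, h3]
    push_cast
    ring
  have h6 := (ZMod.intCast_zmod_eq_zero_iff_dvd _ (p^n)).mp h5
  exact_mod_cast h6

lemma norm_choose_sub_le {n m N : ℕ} (hN : N = p ^ n) (hm : m + 1 ≤ N) :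
    ‖(((N-1).choose m : ℚ_[p]) - (-1)^m)‖
      ≤ (p:ℝ)^(-(n:ℤ)) * (p:ℝ)^((padicValNat p m.factorial : ℤ)) := by
  have hdvd := choose_congr hN hm
  have h1 : ‖((((m.factorial : ℤ) * ((N-1).choose m : ℤ) - (-1)^m * (m.factorial : ℤ)) : ℤ)
      : ℚ_[p])‖ ≤ (p:ℝ)^(-(n:ℤ)) := by
    have h0 := (Padic.norm_int_le_pow_iff_dvd (p := p)
      ((m.factorial : ℤ) * ((N-1).choose m : ℤ) - (-1)^m * (m.factorial : ℤ)) n).mpr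
      (by exact_mod_cast hdvd)
    exact_mod_cast h0
  have h2 : ((((m.factorial : ℤ) * ((N-1).choose m : ℤ) - (-1)^m * (m.factorial : ℤ)) : ℤ)
      : ℚ_[p]) = (m.factorial : ℚ_[p]) * (((N-1).choose m : ℚ_[p]) - (-1)^m) := by
    push_cast
    ring
  rw [h2, norm_mul, norm_natCast_eq _ (Nat.factorial_ne_zero m)] at h1
  have h4 := mul_le_mul_of_nonneg_left h1 (le_of_lt (zpowp_pos (p := p) (padicValNat p m.factorial : ℤ)))
  calc ‖(((N-1).choose m : ℚ_[p]) - (-1)^m)‖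
      = (p:ℝ)^((padicValNat p m.factorial:ℤ)) * ((p:ℝ)^(-(padicValNat p m.factorial:ℤ))
          * ‖(((N-1).choose m : ℚ_[p]) - (-1)^m)‖) := by
        rw [← mul_assoc, ← zpow_add₀ (ne_of_gt ppos)]
        simp
    _ ≤ (p:ℝ)^((padicValNat p m.factorial:ℤ)) * (p:ℝ)^(-(n:ℤ)) := h4
    _ = (p:ℝ)^(-(n:ℤ)) * (p:ℝ)^((padicValNat p m.factorial:ℤ)) := mul_comm _ _

lemma log_approx {w : ℕ} (hw1 : 1 ≤ w) (hw2 : 2 ≤ (p-1)*w) {u : ℚ_[p]}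
    (hu : ‖u - 1‖ ≤ (p:ℝ)^(-(w:ℤ))) (n : ℕ) :
    ‖(u ^ p ^ n - 1) / ((p : ℚ_[p]) ^ n) - plog u‖ ≤ (p:ℝ) ^ (-(n:ℤ)) := by
  have hp2 : 2 ≤ p := hp.out.two_le
  set N := p ^ n with hN
  have hNpos : 0 < N := pow_pos (by omega) n
  have hulog : ‖u - 1‖ < 1 := lt_of_le_of_lt hu (zpow_neg_lt_one hw1)
  set e : ℕ → ℚ_[p] := fun k =>
    if k = 0 then 0 else (u-1) ^ k * (N.choose k : ℚ_[p]) / ((p:ℚ_[p])^n) with he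
  have he_zero : ∀ k ∉ Finset.range (N+1), e k = 0 := by
    intro k hk
    have hkN : N < k := by
      have h' : ¬ (k < N + 1) := fun hc => hk (Finset.mem_range.mpr hc)
      omega
    simp only [he]
    rw [if_neg (by omega), Nat.choose_eq_zero_of_lt hkN]
    simp
  have hes : Summable e := summable_of_ne_finset_zero he_zero
  have hls : Summable (fun k : ℕ => (-1:ℚ_[p])^(k+1) * (u-1) ^ k / (k : ℚ_[p])) :=
    summable_log hulog
  have hexp : (u ^ N - 1) / ((p:ℚ_[p])^n) = ∑' k, e k := by
    rw [tsum_eq_sum he_zero]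
    have hupow : u ^ N = ∑ k ∈ Finset.range (N+1), (u-1) ^ k * (N.choose k : ℚ_[p]) := by
      conv_lhs => rw [show u = (u-1)+1 from by ring]
      rw [add_pow]
      simp
    have hsum2 : ∑ k ∈ Finset.range (N+1), e k
        = ∑ k ∈ Finset.range (N+1), ((u-1) ^ k * (N.choose k : ℚ_[p]) / ((p:ℚ_[p])^n)
            - if k = 0 then 1/((p:ℚ_[p])^n) else 0) := by
      apply Finset.sum_congr rfl
      intro k _
      rcases Nat.eq_zero_or_pos k with rfl | hk
      · simp [he]
      · simp only [he]
        rw [if_neg (by omega), if_neg (by omega)]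
        simp
    rw [hsum2, Finset.sum_sub_distrib, Finset.sum_ite_eq' (Finset.range (N+1)) 0
      (fun _ => 1/((p:ℚ_[p])^n)), if_pos (Finset.mem_range.mpr (by omega)),
      ← Finset.sum_div, ← hupow, sub_div]
  have hdiff : (u ^ N - 1) / ((p:ℚ_[p])^n) - plog u
      = ∑' k : ℕ, (e k - (-1:ℚ_[p])^(k+1) * (u-1) ^ k / (k : ℚ_[p])) := by
    rw [Summable.tsum_sub hes hls, ← hexp, plog_def]
  rw [hdiff]
  apply norm_tsum_le_of_forall_le_of_nonneg (le_of_lt (zpowp_pos _))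
  intro k
  rcases Nat.eq_zero_or_pos k with rfl | hk
  · have h0 : e 0 - (-1:ℚ_[p])^(0+1) * (u-1)^0 / ((0:ℕ) : ℚ_[p]) = 0 := by
      simp [he]
    rw [h0, norm_zero]
    exact le_of_lt (zpowp_pos _)
  rcases le_or_gt k N with hkN | hkN
  · -- main case : 1 ≤ k ≤ N
    obtain ⟨m, rfl⟩ : ∃ m, k = m + 1 := ⟨k-1, by omega⟩
    have hm : m + 1 ≤ N := hkN
    have hnat : N * (N - 1).choose m = N.choose (m+1) * (m+1) := by
      have h0 := Nat.add_one_mul_choose_eq (N-1) m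
      have hsN : N - 1 + 1 = N := by omega
      simpa [Nat.succ_eq_add_one, hsN] using h0
    have hNc : ((N:ℕ) : ℚ_[p]) = (p:ℚ_[p])^n := by
      rw [hN]
      push_cast
      ring
    have hKN0 : ((N:ℕ) : ℚ_[p]) ≠ 0 := Nat.cast_ne_zero.mpr (by omega)
    have hKm0 : ((m+1 : ℕ) : ℚ_[p]) ≠ 0 := Nat.cast_ne_zero.mpr (by omega)
    have hdivid : (N.choose (m+1) : ℚ_[p]) / ((p:ℚ_[p])^n)
        = ((N-1).choose m : ℚ_[p]) / ((m+1 : ℕ) : ℚ_[p]) := by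
      rw [← hNc, div_eq_div_iff hKN0 hKm0]
      have hc : (N:ℚ_[p]) * ((N-1).choose m : ℚ_[p])
          = (N.choose (m+1) : ℚ_[p]) * ((m+1:ℕ) : ℚ_[p]) := by exact_mod_cast hnat
      linear_combination -hc
    have hsign : (-1:ℚ_[p])^(m+1+1) = (-1:ℚ_[p])^m := by
      rw [pow_succ, pow_succ]
      ring
    have he1 : e (m+1) = (u-1)^(m+1) * ((N.choose (m+1) : ℚ_[p]) / ((p:ℚ_[p])^n)) := by
      simp only [he]
      rw [if_neg (Nat.succ_ne_zero m)]
      ring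
    have heq : e (m+1) - (-1:ℚ_[p])^(m+1+1) * (u-1)^(m+1) / ((m+1 : ℕ) : ℚ_[p])
        = ((((N-1).choose m : ℚ_[p]) - (-1)^m) * (u-1)^(m+1)) / ((m+1 : ℕ) : ℚ_[p]) := by
      rw [he1, hdivid, hsign]
      ring
    have hX : (p:ℝ)^((padicValNat p m.factorial : ℤ))
        * ‖(u-1)^(m+1) / ((m+1:ℕ) : ℚ_[p])‖
        = ‖(u-1)^(m+1) / (((m+1).factorial : ℕ) : ℚ_[p])‖ := by
      rw [div_eq_mul_inv, div_eq_mul_inv, norm_mul, norm_mul,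
        norm_inv_natCast _ (by omega : (m+1:ℕ) ≠ 0),
        norm_inv_natCast _ (Nat.factorial_ne_zero (m+1))]
      have hval : padicValNat p (m+1).factorial
          = padicValNat p (m+1) + padicValNat p m.factorial := by
        rw [Nat.factorial_succ]
        exact padicValNat.mul (by omega) (Nat.factorial_ne_zero m)
      rw [hval]
      push_cast
      rw [zpow_add₀ (ne_of_gt ppos)]
      ring
    have hterm : ‖(u-1)^(m+1) / (((m+1).factorial : ℕ) : ℚ_[p])‖ ≤ 1 := by
      have := norm_term_le hw2 hu (Nat.succ_ne_zero m)
      calc ‖(u-1)^(m+1) / (((m+1).factorial : ℕ) : ℚ_[p])‖ ≤ ‖u - 1‖ := this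
        _ ≤ (p:ℝ)^(-(w:ℤ)) := hu
        _ ≤ 1 := zpow_le_one
    have hcs := norm_choose_sub_le (p := p) hN hm
    calc ‖e (m+1) - (-1:ℚ_[p])^(m+1+1) * (u-1)^(m+1) / ((m+1 : ℕ) : ℚ_[p])‖
        = ‖(((N-1).choose m : ℚ_[p]) - (-1)^m)‖ * ‖(u-1)^(m+1) / ((m+1:ℕ) : ℚ_[p])‖ := by
          rw [heq, mul_div_assoc, norm_mul]
      _ ≤ ((p:ℝ)^(-(n:ℤ)) * (p:ℝ)^((padicValNat p m.factorial : ℤ)))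
            * ‖(u-1)^(m+1) / ((m+1:ℕ) : ℚ_[p])‖ :=
          mul_le_mul_of_nonneg_right hcs (norm_nonneg _)
      _ = (p:ℝ)^(-(n:ℤ)) * ((p:ℝ)^((padicValNat p m.factorial : ℤ))
            * ‖(u-1)^(m+1) / ((m+1:ℕ) : ℚ_[p])‖) := by ring
      _ = (p:ℝ)^(-(n:ℤ)) * ‖(u-1)^(m+1) / (((m+1).factorial : ℕ) : ℚ_[p])‖ := by rw [hX]
      _ ≤ (p:ℝ)^(-(n:ℤ)) * 1 := mul_le_mul_of_nonneg_left hterm (le_of_lt (zpowp_pos _))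
      _ = (p:ℝ)^(-(n:ℤ)) := mul_one _
  · -- tail case : k > N
    have he0 : e k = 0 := he_zero k (by simp [Finset.mem_range]; omega)
    rw [he0, zero_sub, norm_neg, mul_div_assoc, norm_mul, norm_neg_one_pow, one_mul,
      div_eq_mul_inv, norm_mul, norm_pow, norm_inv_natCast _ (by omega : k ≠ 0)]
    have ha4 := arith4 (p := p) (w := w) (n := n) (k := k) hw1 (by omega)
    have h2 : ((p:ℝ)^(-(w:ℤ)))^k = (p:ℝ)^(-((w*k : ℕ):ℤ)) := by
      rw [← zpow_natCast ((p:ℝ)^(-(w:ℤ))) k, ← zpow_mul]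
      congr 1
      push_cast
      ring
    calc ‖u-1‖^k * (p:ℝ)^((padicValNat p k:ℤ))
        ≤ (p:ℝ)^(-((w*k:ℕ):ℤ)) * (p:ℝ)^((padicValNat p k:ℤ)) := by
          apply mul_le_mul_of_nonneg_right _ (le_of_lt (zpowp_pos _))
          rw [← h2]
          exact pow_le_pow_left₀ (norm_nonneg _) hu k
      _ = (p:ℝ)^(-((w*k:ℕ):ℤ) + (padicValNat p k:ℤ)) := (zpow_add₀ (ne_of_gt ppos) _ _).symm
      _ ≤ (p:ℝ)^(-(n:ℤ)) := zpow_mono (by omega)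

lemma tendsto_zpow_neg : Tendsto (fun n : ℕ => (p:ℝ)^(-(n:ℤ))) atTop (nhds 0) := by
  have h : ∀ n : ℕ, (p:ℝ)^(-(n:ℤ)) = ((p:ℝ)⁻¹)^n := by
    intro n
    rw [zpow_neg, zpow_natCast, inv_pow]
  simp only [h]
  exact tendsto_pow_atTop_nhds_zero_of_lt_one (by positivity) (inv_lt_one_of_one_lt₀ one_lt_pR)

lemma eq_of_norm_sub_le_zpow {a b : ℚ_[p]}
    (h : ∀ n : ℕ, ‖a - b‖ ≤ 2 * (p:ℝ)^(-(n:ℤ))) : a = b := by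
  have h0 : Tendsto (fun n : ℕ => 2*(p:ℝ)^(-(n:ℤ))) atTop (nhds 0) := by
    have := (tendsto_zpow_neg (p := p)).const_mul (2:ℝ)
    simpa using this
  have h1 : ‖a - b‖ ≤ 0 := ge_of_tendsto' h0 h
  have h2 : ‖a - b‖ = 0 := le_antisymm h1 (norm_nonneg _)
  rw [norm_eq_zero] at h2
  exact sub_eq_zero.mp h2

lemma plog_pexp {w : ℕ} (hw1 : 1 ≤ w) (hw2 : 2 ≤ (p-1)*w) {t : ℚ_[p]}
    (ht : ‖t‖ ≤ (p:ℝ)^(-(w:ℤ))) : plog (pexp t) = t := by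
  have hrad : ‖t‖ < rad p := lt_of_le_of_lt ht (zpow_lt_rad hw2)
  have hE : ‖pexp t - 1‖ ≤ (p:ℝ)^(-(w:ℤ)) := le_trans (norm_pexp_sub_one_le hw2 ht) ht
  have ht1 : ‖t‖ ≤ 1 := le_trans ht zpow_le_one
  apply eq_of_norm_sub_le_zpow
  intro n
  have hA := log_approx hw1 hw2 hE n
  have hcast : ((p ^ n : ℕ) : ℚ_[p]) = (p:ℚ_[p])^n := by push_cast; ring
  have hpn0 : ((p:ℚ_[p])^n) ≠ 0 := by
    apply pow_ne_zero
    exact_mod_cast hp.out.ne_zero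
  have hznorm : ‖(p:ℚ_[p])^n‖ = (p:ℝ)^(-(n:ℤ)) := by
    rw [norm_pow, Padic.norm_p, inv_pow, ← zpow_natCast, ← zpow_neg]
  have hpow : (pexp t) ^ p ^ n = pexp ((p:ℚ_[p])^n * t) := by
    rw [← pexp_natCast_mul hrad (p^n), hcast]
  have hzt : ‖(p:ℚ_[p])^n * t‖ ≤ (p:ℝ)^(-(w:ℤ)) := by
    rw [norm_mul, hznorm]
    calc (p:ℝ)^(-(n:ℤ)) * ‖t‖ ≤ 1 * ‖t‖ := by
          apply mul_le_mul_of_nonneg_right _ (norm_nonneg t)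
          exact zpow_le_one
      _ = ‖t‖ := one_mul _
      _ ≤ _ := ht
  have hzrad : ‖(p:ℚ_[p])^n * t‖ < rad p := lt_of_le_of_lt hzt (zpow_lt_rad hw2)
  have htailnorm : ‖pexp ((p:ℚ_[p])^n * t) - 1 - (p:ℚ_[p])^n * t‖
      ≤ (p:ℝ)^(-(n:ℤ)) * (p:ℝ)^(-(n:ℤ)) * ‖t‖ := by
    rw [pexp_sub_one_sub hzrad]
    apply norm_tsum_le_of_forall_le_of_nonneg
      (by positivity)
    intro m
    have hsplit : ((p:ℚ_[p])^n * t) ^ (m+2) / ((m+2).factorial : ℚ_[p])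
        = ((p:ℚ_[p])^n)^(m+2) * (t ^ (m+2) / ((m+2).factorial : ℚ_[p])) := by
      rw [mul_pow]
      ring
    rw [hsplit, norm_mul, norm_pow, hznorm]
    have h1 : ‖t ^ (m+2) / ((m+2).factorial : ℚ_[p])‖ ≤ ‖t‖ := norm_term_le hw2 ht (by omega)
    have h2 : ((p:ℝ)^(-(n:ℤ)))^(m+2) ≤ ((p:ℝ)^(-(n:ℤ)))^2 :=
      pow_le_pow_of_le_one (le_of_lt (zpowp_pos _)) zpow_le_one (by omega)
    calc ((p:ℝ)^(-(n:ℤ)))^(m+2) * ‖t ^ (m+2) / ((m+2).factorial : ℚ_[p])‖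
        ≤ ((p:ℝ)^(-(n:ℤ)))^2 * ‖t‖ := mul_le_mul h2 h1 (norm_nonneg _) (by positivity)
      _ = (p:ℝ)^(-(n:ℤ)) * (p:ℝ)^(-(n:ℤ)) * ‖t‖ := by ring
  have hB : ‖((pexp t) ^ p ^ n - 1) / ((p:ℚ_[p])^n) - t‖ ≤ (p:ℝ)^(-(n:ℤ)) := by
    have heq2 : ((pexp t) ^ p ^ n - 1) / ((p:ℚ_[p])^n) - t
        = (pexp ((p:ℚ_[p])^n * t) - 1 - (p:ℚ_[p])^n * t) / ((p:ℚ_[p])^n) := by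
      rw [hpow]
      field_simp
    rw [heq2, norm_div, hznorm, div_le_iff₀ (zpowp_pos _)]
    calc ‖pexp ((p:ℚ_[p])^n * t) - 1 - (p:ℚ_[p])^n * t‖
        ≤ (p:ℝ)^(-(n:ℤ)) * (p:ℝ)^(-(n:ℤ)) * ‖t‖ := htailnorm
      _ ≤ (p:ℝ)^(-(n:ℤ)) * (p:ℝ)^(-(n:ℤ)) * 1 := by
          apply mul_le_mul_of_nonneg_left ht1 (by positivity)
      _ = (p:ℝ)^(-(n:ℤ)) * (p:ℝ)^(-(n:ℤ)) := mul_one _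
  calc ‖plog (pexp t) - t‖
      ≤ ‖plog (pexp t) - ((pexp t) ^ p ^ n - 1) / ((p:ℚ_[p])^n)‖
        + ‖((pexp t) ^ p ^ n - 1) / ((p:ℚ_[p])^n) - t‖ := by
        have := dist_triangle (plog (pexp t)) (((pexp t) ^ p ^ n - 1) / ((p:ℚ_[p])^n)) t
        simpa [dist_eq_norm] using this
    _ ≤ (p:ℝ)^(-(n:ℤ)) + (p:ℝ)^(-(n:ℤ)) := by
        apply add_le_add _ hB
        rw [norm_sub_rev]
        exact hA
    _ = 2 * (p:ℝ)^(-(n:ℤ)) := by ring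

lemma plog_inj {w : ℕ} (hw1 : 1 ≤ w) (hw2 : 2 ≤ (p-1)*w) {u v : ℚ_[p]}
    (hu : ‖u-1‖ ≤ (p:ℝ)^(-(w:ℤ))) (hv : ‖v-1‖ ≤ (p:ℝ)^(-(w:ℤ)))
    (heq : plog u = plog v) : u = v := by
  have hu1 : ‖u-1‖ < 1 := lt_of_le_of_lt hu (zpow_neg_lt_one hw1)
  have hv1 : ‖v-1‖ < 1 := lt_of_le_of_lt hv (zpow_neg_lt_one hw1)
  have hsu := summable_log hu1
  have hsv := summable_log hv1
  set c : ℕ → ℚ_[p] := fun k =>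
    (-1:ℚ_[p])^(k+1) * (u-1)^k/(k:ℚ_[p]) - (-1:ℚ_[p])^(k+1) * (v-1)^k/(k:ℚ_[p]) with hc
  have hcs : Summable c := hsu.sub hsv
  have h0 : ∑' k, c k = 0 := by
    simp only [hc]
    rw [Summable.tsum_sub hsu hsv, ← plog_def, ← plog_def, heq, sub_self]
  have hpeel : ∑' k, c k = c 0 + (c 1 + ∑' k, c (k+2)) := by
    rw [Summable.tsum_eq_zero_add hcs, Summable.tsum_eq_zero_add ((summable_nat_add_iff 1).mpr hcs)]
  have hc0 : c 0 = 0 := by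
    simp [hc]
  have hc1 : c 1 = (u - 1) - (v - 1) := by
    norm_num [hc]
  have htail : ‖∑' k, c (k+2)‖ ≤ (p:ℝ)^(-1:ℤ) * ‖(u-1) - (v-1)‖ := by
    apply norm_tsum_le_of_forall_le_of_nonneg (by positivity)
    intro m
    have hck : c (m+2) = (-1:ℚ_[p])^(m+2+1)
        * ((∑ i ∈ Finset.range (m+2), (u-1)^i * (v-1)^(m+2-1-i)) * ((u-1) - (v-1)))
        / ((m+2 : ℕ):ℚ_[p]) := by
      simp only [hc]
      rw [geom_sum₂_mul (u-1) (v-1) (m+2)]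
      ring
    rw [hck, mul_div_assoc, norm_mul, norm_neg_one_pow, one_mul, div_eq_mul_inv, norm_mul,
      norm_mul, norm_inv_natCast _ (by omega : (m+2:ℕ) ≠ 0)]
    have hgs : ‖∑ i ∈ Finset.range (m+2), (u-1)^i * (v-1)^(m+2-1-i)‖
        ≤ ((p:ℝ)^(-(w:ℤ)))^(m+1) := by
      apply norm_sum_le_of_forall_le_of_nonneg (by positivity)
      intro i hi
      have him : i < m + 2 := Finset.mem_range.mp hi
      rw [norm_mul, norm_pow, norm_pow]
      have e1 : ‖u-1‖^i ≤ ((p:ℝ)^(-(w:ℤ)))^i := pow_le_pow_left₀ (norm_nonneg _) hu i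
      have e2 : ‖v-1‖^(m+2-1-i) ≤ ((p:ℝ)^(-(w:ℤ)))^(m+2-1-i) :=
        pow_le_pow_left₀ (norm_nonneg _) hv _
      calc ‖u-1‖^i * ‖v-1‖^(m+2-1-i)
          ≤ ((p:ℝ)^(-(w:ℤ)))^i * ((p:ℝ)^(-(w:ℤ)))^(m+2-1-i) :=
            mul_le_mul e1 e2 (by positivity) (by positivity)
        _ = ((p:ℝ)^(-(w:ℤ)))^(m+1) := by
            rw [← pow_add]
            congr 1
            omega
    have key : ((p:ℝ)^(-(w:ℤ)))^(m+1) * (p:ℝ)^((padicValNat p (m+2):ℤ)) ≤ (p:ℝ)^(-1:ℤ) := by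
      have ha1 := arith1 (p := p) hw1 hw2 (show 2 ≤ m+2 by omega)
      have h2 : ((p:ℝ)^(-(w:ℤ)))^(m+1) = (p:ℝ)^(-((w*(m+1) : ℕ):ℤ)) := by
        rw [← zpow_natCast ((p:ℝ)^(-(w:ℤ))) (m+1), ← zpow_mul]
        congr 1
        push_cast
        ring
      rw [h2, ← zpow_add₀ (ne_of_gt ppos)]
      apply zpow_mono
      have hms : m + 2 - 1 = m + 1 := by omega
      rw [hms] at ha1
      omega
    calc ‖∑ i ∈ Finset.range (m+2), (u-1)^i * (v-1)^(m+2-1-i)‖ * ‖(u-1) - (v-1)‖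
          * (p:ℝ)^((padicValNat p (m+2):ℤ))
        ≤ ((p:ℝ)^(-(w:ℤ)))^(m+1) * ‖(u-1) - (v-1)‖ * (p:ℝ)^((padicValNat p (m+2):ℤ)) := by
          apply mul_le_mul_of_nonneg_right _ (le_of_lt (zpowp_pos _))
          exact mul_le_mul_of_nonneg_right hgs (norm_nonneg _)
      _ = (((p:ℝ)^(-(w:ℤ)))^(m+1) * (p:ℝ)^((padicValNat p (m+2):ℤ))) * ‖(u-1) - (v-1)‖ := by
          ring
      _ ≤ (p:ℝ)^(-1:ℤ) * ‖(u-1) - (v-1)‖ := mul_le_mul_of_nonneg_right key (norm_nonneg _)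
  have hx : c 0 + (c 1 + ∑' k, c (k+2)) = 0 := by rw [← hpeel, h0]
  rw [hc0, hc1] at hx
  have hsum0 : (u-1) - (v-1) = - ∑' k, c (k+2) := by linear_combination hx
  have hfin : ‖(u-1)-(v-1)‖ ≤ (p:ℝ)^(-1:ℤ) * ‖(u-1)-(v-1)‖ := by
    calc ‖(u-1)-(v-1)‖ = ‖∑' k, c (k+2)‖ := by rw [hsum0, norm_neg]
      _ ≤ (p:ℝ)^(-1:ℤ) * ‖(u-1) - (v-1)‖ := htail
  have hppinv : (p:ℝ)^(-1:ℤ) < 1 := by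
    simpa using zpow_neg_lt_one (p := p) (w := 1) le_rfl
  have hzero : ‖(u-1)-(v-1)‖ = 0 := by
    nlinarith [norm_nonneg ((u-1)-(v-1))]
  rw [norm_eq_zero, sub_eq_zero] at hzero
  exact sub_left_inj.mp hzero

lemma pexp_plog {w : ℕ} (hw1 : 1 ≤ w) (hw2 : 2 ≤ (p-1)*w) {u : ℚ_[p]}
    (hu : ‖u - 1‖ ≤ (p:ℝ)^(-(w:ℤ))) : pexp (plog u) = u := by
  have ht : ‖plog u‖ ≤ (p:ℝ)^(-(w:ℤ)) := le_trans (norm_plog_le hw2 hu) hu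
  have h1 : plog (pexp (plog u)) = plog u := plog_pexp hw1 hw2 ht
  exact plog_inj hw1 hw2 (le_trans (norm_pexp_sub_one_le hw2 ht) ht) hu h1

open scoped Classical in
lemma qbracket_def {K : Type*} [NormedField K] [CompleteSpace K] (q x : K) :
    qbracket q x = if q = 1 then x else (qpow q x - 1) / (q - 1) := rfl

lemma qpow_def {K : Type*} [NormedField K] [CompleteSpace K] (q x : K) :
    qpow q x = pexp (x * plog q) := rfl

end Stmt17Aux

open Stmt17Aux in
theorem stmt17 (p : ℕ) [Fact p.Prime] :
    (∃ x q : ℚ_[p], ‖x‖ ≤ 1 ∧ ‖q‖ ≤ 1 ∧ x ≠ 0 ∧ x ≠ 1 ∧ q ≠ 1 ∧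
      ‖q - 1‖ < (p : ℝ) ^ (-(1 : ℝ) / ((p : ℝ) - 1)) ∧ qbracket q x = x) ↔ p = 3 := by
  have hpp : p.Prime := Fact.out
  constructor
  · rintro ⟨x, q, hx1, hq1, hx0, hxne1, hqne1, hqn, heq⟩
    by_contra hp3
    set w : ℕ := if p = 2 then 2 else 1 with hwdef
    have hw1 : 1 ≤ w := by
      rw [hwdef]
      split <;> norm_num
    have hw2 : 2 ≤ (p-1)*w := by
      rcases eq_or_ne p 2 with h2 | h2
      · simp [hwdef, h2]
      · have h3 : 3 ≤ p := by
          have := hpp.two_le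
          omega
        rw [hwdef, if_neg h2]
        omega
    have hq : ‖q - 1‖ ≤ (p:ℝ)^(-(w:ℤ)) := by
      have hne : q - 1 ≠ 0 := sub_ne_zero.mpr hqne1
      rw [Padic.norm_eq_zpow_neg_valuation hne] at hqn ⊢
      set m := (q-1).valuation with hm
      have h1 : ((-m : ℤ) : ℝ) < -(1:ℝ)/((p:ℝ)-1) := by
        apply (Real.rpow_lt_rpow_left_iff (one_lt_pR (p := p))).mp
        rw [Real.rpow_intCast]
        exact hqn
      have h2 : (1:ℝ)/((p:ℝ)-1) < (m:ℝ) := by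
        push_cast at h1
        rw [neg_div] at h1
        linarith
      have h3 : (w:ℤ) ≤ m := by
        rcases eq_or_ne p 2 with h4 | h4
        · have h5 : (1:ℝ) < (m:ℝ) := by
            rw [h4] at h2
            norm_num at h2
            exact h2
          have h6 : (1:ℤ) < m := by exact_mod_cast h5
          rw [hwdef, if_pos h4]
          omega
        · have h5 : (0:ℝ) < (m:ℝ) :=
            lt_trans (div_pos one_pos pm1_pos) h2
          have h6 : (0:ℤ) < m := by exact_mod_cast h5
          rw [hwdef, if_neg h4]
          omega
      exact zpow_mono (by omega)
    rw [qbracket_def, if_neg hqne1, qpow_def, div_eq_iff (sub_ne_zero.mpr hqne1)] at heq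
    have hqexp : pexp (plog q) = q := pexp_plog hw1 hw2 hq
    set t := plog q with htdef
    have ht : ‖t‖ ≤ (p:ℝ)^(-(w:ℤ)) := le_trans (norm_plog_le hw2 hq) hq
    have htrad : ‖t‖ < rad p := lt_of_le_of_lt ht (zpow_lt_rad hw2)
    have htne : t ≠ 0 := by
      intro h0
      apply hqne1
      have h11 : q = pexp 0 := by rw [← hqexp, h0]
      rw [h11, pexp_zero]
    have hxt : ‖x * t‖ < rad p := by
      rw [norm_mul]
      calc ‖x‖ * ‖t‖ ≤ 1 * ‖t‖ := mul_le_mul_of_nonneg_right hx1 (norm_nonneg t)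
        _ = ‖t‖ := one_mul _
        _ < rad p := htrad
    rw [← hqexp] at heq
    -- heq : pexp (x * t) - 1 = x * (pexp t - 1)
    have s1 : Summable (fun n : ℕ => x^n * (t^n / (n.factorial : ℚ_[p]))) := by
      apply Summable.congr (summable_exp hxt)
      intro n
      rw [mul_pow]
      ring
    have s2 : Summable (fun n : ℕ => x * (t^n / (n.factorial : ℚ_[p]))) :=
      (summable_exp htrad).mul_left x
    set f : ℕ → ℚ_[p] := fun n => (x^n - x) * (t^n / (n.factorial : ℚ_[p])) with hfdef
    have e3 : ∀ n, f n = x^n * (t^n/(n.factorial : ℚ_[p])) - x * (t^n/(n.factorial : ℚ_[p])) := by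
      intro n
      simp only [hfdef]
      ring
    have hf : Summable f := Summable.congr (s1.sub s2) (fun n => (e3 n).symm)
    have hsum : ∑' n, f n = 1 - x := by
      calc ∑' n, f n
          = ∑' n, (x^n * (t^n/(n.factorial:ℚ_[p])) - x * (t^n/(n.factorial:ℚ_[p]))) :=
            tsum_congr e3
        _ = (∑' n, x^n * (t^n/(n.factorial:ℚ_[p]))) - ∑' n, x*(t^n/(n.factorial:ℚ_[p])) :=
            Summable.tsum_sub s1 s2
        _ = pexp (x*t) - x * pexp t := by
            congr 1
            · rw [pexp_def]
              apply tsum_congr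
              intro n
              rw [mul_pow]
              ring
            · rw [pexp_def, tsum_mul_left]
        _ = 1 - x := by linear_combination heq
    have hpeel : ∑' n, f n = f 0 + (f 1 + ∑' n, f (n+2)) := by
      rw [Summable.tsum_eq_zero_add hf, Summable.tsum_eq_zero_add ((summable_nat_add_iff 1).mpr hf)]
    have hf0 : f 0 = 1 - x := by
      simp [hfdef]
    have hf1 : f 1 = 0 := by
      simp [hfdef]
    have hzero : ∑' n, f (n+2) = 0 := by
      have h6 := hsum
      rw [hpeel, hf0, hf1] at h6
      linear_combination h6
    set g : ℕ → ℚ_[p] :=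
      fun n => (∑ j ∈ Finset.range (n+1), x^j) * (t^(n+2) / ((n+2).factorial : ℚ_[p]))
      with hgdef
    have hx' : (x*(x-1)) ≠ 0 := mul_ne_zero hx0 (sub_ne_zero.mpr hxne1)
    have hfact : ∀ n : ℕ, f (n+2) = (x*(x-1)) * g n := by
      intro n
      simp only [hfdef, hgdef]
      have hgm := geom_sum_mul x (n+1)
      linear_combination (-(x * (t^(n+2)/((n+2).factorial : ℚ_[p])))) * hgm
    have hS : ∑' n, g n = 0 := by
      have h7 : ∑' n, f (n+2) = (x*(x-1)) * ∑' n, g n := by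
        rw [← tsum_mul_left]
        exact tsum_congr hfact
      have h8 : (x*(x-1)) * ∑' n, g n = 0 := by
        rw [← h7]
        exact hzero
      exact (mul_eq_zero.mp h8).resolve_left hx'
    have hgsum : Summable g := by
      have h9 : Summable (fun n => f (n+2)) := (summable_nat_add_iff 2).mpr hf
      apply Summable.congr (h9.mul_left ((x*(x-1))⁻¹))
      intro n
      rw [hfact n, inv_mul_cancel_left₀ hx']
    have hpeel2 : ∑' n, g n = g 0 + ∑' n, g (n+1) := Summable.tsum_eq_zero_add hgsum
    set Y : ℝ := ‖t‖^2 * ((p:ℝ)^((padicValNat p 2 : ℤ))) with hY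
    have hg0 : ‖g 0‖ = Y := by
      have e0 : g 0 = t^2 / ((2:ℕ) : ℚ_[p]) := by
        simp only [hgdef]
        norm_num [Nat.factorial_two]
      rw [e0, div_eq_mul_inv, norm_mul, norm_pow, norm_inv_natCast 2 (by norm_num), hY]
    have htb : ∀ k : ℕ, ‖g (k+1)‖ ≤ (p:ℝ)^(-1:ℤ) * Y := by
      intro k
      simp only [hgdef]
      rw [norm_mul, div_eq_mul_inv, norm_mul, norm_pow,
        norm_inv_natCast _ (Nat.factorial_ne_zero _)]
      have hσ : ‖∑ j ∈ Finset.range (k+1+1), x^j‖ ≤ 1 := by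
        apply IsUltrametricDist.norm_sum_le_of_forall_le_of_nonneg zero_le_one
        intro j _
        rw [norm_pow]
        exact pow_le_one₀ (norm_nonneg x) hx1
      have harith := arith2 (p := p) hw1 hw2 hp3 (show 3 ≤ k+1+2 by omega)
      have hsub : k+1+2-2 = k+1 := by omega
      rw [hsub] at harith
      have hkey : ‖t‖^(k+1) * (p:ℝ)^((padicValNat p (k+1+2).factorial : ℤ))
          ≤ (p:ℝ)^(-1:ℤ) * (p:ℝ)^((padicValNat p 2 : ℤ)) := by
        have e1 : ‖t‖^(k+1) ≤ ((p:ℝ)^(-(w:ℤ)))^(k+1) :=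
          pow_le_pow_left₀ (norm_nonneg t) ht (k+1)
        have e2 : ((p:ℝ)^(-(w:ℤ)))^(k+1) = (p:ℝ)^(-((w*(k+1):ℕ):ℤ)) := by
          rw [← zpow_natCast ((p:ℝ)^(-(w:ℤ))) (k+1), ← zpow_mul]
          congr 1
          push_cast
          ring
        calc ‖t‖^(k+1) * (p:ℝ)^((padicValNat p (k+1+2).factorial : ℤ))
            ≤ (p:ℝ)^(-((w*(k+1):ℕ):ℤ)) * (p:ℝ)^((padicValNat p (k+1+2).factorial : ℤ)) := by
              apply mul_le_mul_of_nonneg_right _ (le_of_lt (zpowp_pos _))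
              rw [← e2]
              exact e1
          _ = (p:ℝ)^(-((w*(k+1):ℕ):ℤ) + (padicValNat p (k+1+2).factorial : ℤ)) :=
              (zpow_add₀ (ne_of_gt ppos) _ _).symm
          _ ≤ (p:ℝ)^((-1:ℤ) + (padicValNat p 2 : ℤ)) := zpow_mono (by omega)
          _ = (p:ℝ)^(-1:ℤ) * (p:ℝ)^((padicValNat p 2 : ℤ)) := zpow_add₀ (ne_of_gt ppos) _ _
      calc ‖∑ j ∈ Finset.range (k+1+1), x^j‖
            * (‖t‖^(k+1+2) * (p:ℝ)^((padicValNat p (k+1+2).factorial : ℤ)))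
          ≤ 1 * (‖t‖^(k+1+2) * (p:ℝ)^((padicValNat p (k+1+2).factorial : ℤ))) := by
            apply mul_le_mul_of_nonneg_right hσ
            positivity
        _ = ‖t‖^2 * (‖t‖^(k+1) * (p:ℝ)^((padicValNat p (k+1+2).factorial : ℤ))) := by
            ring
        _ ≤ ‖t‖^2 * ((p:ℝ)^(-1:ℤ) * (p:ℝ)^((padicValNat p 2 : ℤ))) := by
            apply mul_le_mul_of_nonneg_left hkey
            positivity
        _ = (p:ℝ)^(-1:ℤ) * Y := by
            rw [hY]
            ring
    have hY0 : 0 < Y := by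
      rw [hY]
      have h12 : 0 < ‖t‖ := norm_pos_iff.mpr htne
      exact mul_pos (pow_pos h12 2) (zpowp_pos _)
    have h10 : g 0 = - ∑' n, g (n+1) := by
      have h11 := hS
      rw [hpeel2] at h11
      linear_combination h11
    have hcontr : Y ≤ (p:ℝ)^(-1:ℤ) * Y := by
      calc Y = ‖g 0‖ := hg0.symm
        _ = ‖∑' n, g (n+1)‖ := by rw [h10, norm_neg]
        _ ≤ (p:ℝ)^(-1:ℤ) * Y :=
            IsUltrametricDist.norm_tsum_le_of_forall_le_of_nonneg
              (mul_nonneg (le_of_lt (zpowp_pos _)) (le_of_lt hY0)) htb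
    have hppinv : (p:ℝ)^(-1:ℤ) < 1 := by
      simpa using zpow_neg_lt_one (p := p) (w := 1) le_rfl
    nlinarith
  · rintro rfl
    have hw1 : (1:ℕ) ≤ 1 := le_rfl
    have hw2 : 2 ≤ (3-1)*1 := by norm_num
    have hqb : ‖(-2 : ℚ_[3]) - 1‖ ≤ ((3:ℕ):ℝ)^(-((1:ℕ):ℤ)) := by
      have h1 : (-2 : ℚ_[3]) - 1 = -((3:ℕ) : ℚ_[3]) := by norm_num
      rw [h1, norm_neg, Padic.norm_p]
      norm_num
    have hexp3 : pexp (plog (-2 : ℚ_[3])) = -2 := pexp_plog hw1 hw2 hqb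
    have hlog : ‖plog (-2:ℚ_[3])‖ < rad 3 :=
      lt_of_le_of_lt (le_trans (norm_plog_le hw2 hqb) hqb) (zpow_lt_rad hw2)
    refine ⟨3, -2, ?_, ?_, ?_, ?_, ?_, ?_, ?_⟩
    · have := Padic.norm_int_le_one (p := 3) 3
      exact_mod_cast this
    · have := Padic.norm_int_le_one (p := 3) (-2)
      exact_mod_cast this
    · norm_num
    · norm_num
    · norm_num
    · have h1 : (-2 : ℚ_[3]) - 1 = -((3:ℕ) : ℚ_[3]) := by norm_num
      rw [h1, norm_neg, Padic.norm_p]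
      have h2 : ((3:ℕ):ℝ) = (3:ℝ) := by norm_num
      rw [h2]
      rw [show (-(1:ℝ))/((3:ℝ)-1) = (-(1/2):ℝ) by norm_num]
      calc (3:ℝ)⁻¹ = (3:ℝ)^(-(1:ℝ)) := by
            rw [Real.rpow_neg (by norm_num), Real.rpow_one]
        _ < (3:ℝ)^(-(1/2):ℝ) :=
            Real.rpow_lt_rpow_of_exponent_lt (by norm_num) (by norm_num)
    · have h4 : (3:ℚ_[3]) = ((3:ℕ) : ℚ_[3]) := by norm_num
      have key : pexp ((3:ℚ_[3]) * plog (-2)) = -8 := by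
        rw [h4, pexp_natCast_mul hlog 3, hexp3]
        norm_num
      rw [qbracket_def, if_neg (by norm_num : (-2:ℚ_[3]) ≠ 1), qpow_def, key,
        div_eq_iff (by norm_num : (-2:ℚ_[3]) - 1 ≠ 0)]
      norm_num
end
end
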